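/- Let (Λ, 𝓑_Λ) and (𝓓, 𝓑_𝓓) be measurable spaces, Q : Λ → 𝓓 measurable, P_init a probability measure on Λ, P_pred the pushforward of P_init under Q, and P_obs a probability measure on 𝓓 that is absolutely continuous with respect to P_pred, with Radon–Nikodym derivative r = dP_obs/dP_pred. Define the updated measure P_update on Λ by P_update(A) = ∫_A r(Q(λ)) dP_init(λ) for A ∈ 𝓑_Λ. Then P_update is a probability measure on Λ and its pushforward under Q equals P_obs; in particular P_update(Q⁻¹(B)) = P_obs(B) for every B ∈ 𝓑_𝓓, i.e., P_update is a data-consistent (pullback) solution. -/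
import Mathlib


open MeasureTheory
open scoped ENNReal

theorem stmt_3 {Λ D : Type*} [MeasurableSpace Λ] [MeasurableSpace D]
    (Q : Λ → D) (hQ : Measurable Q)
    (Pinit : Measure Λ) [IsProbabilityMeasure Pinit]
    (Pobs : Measure D) [IsProbabilityMeasure Pobs]
    (r : D → ℝ≥0∞) (hr : Measurable r)
    (hRN : ∀ B : Set D, MeasurableSet B → Pobs B = ∫⁻ y in B, r y ∂(Pinit.map Q))
    (Pupdate : Measure Λ)
    (hPu : ∀ A : Set Λ, MeasurableSet A → Pupdate A = ∫⁻ l in A, r (Q l) ∂Pinit) :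
    IsProbabilityMeasure Pupdate ∧ Pupdate.map Q = Pobs ∧
      ∀ B : Set D, MeasurableSet B → Pupdate (Q ⁻¹' B) = Pobs B := by
  have key : ∀ B : Set D, MeasurableSet B → Pupdate (Q ⁻¹' B) = Pobs B := by
    intro B hB
    rw [hPu _ (hQ hB), hRN B hB, setLIntegral_map hB hr hQ]
  refine ⟨⟨?_⟩, ?_, key⟩
  · have := key Set.univ MeasurableSet.univ
    simpa using this
  · ext B hB
    rw [Measure.map_apply hQ hB, key B hB]
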